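/- Let H ≤ S_d and let G = S_n × H act on ℝ^{n×d} by ((q,h)·X)_{ij} = X_{q⁻¹(i), h⁻¹(j)}. Then every linear G-equivariant map L : ℝ^{n×d} → ℝ^{n×d} has the form L(X)_i = L₁(x_i) + L₂(Σ_{j≠i} x_j), where x_i ∈ ℝ^d is the i-th row of X and L₁, L₂ : ℝ^d → ℝ^d are linear H-equivariant maps. Conversely, every map of this form is linear and G-equivariant. -/

import Mathlib

open Finset

/-- A linear map `M : ℝ^d → ℝ^d` is `H`-equivariant for `H ≤ S_d` acting by permuting
coordinates. -/
def IsHEquivariant {d : ℕ} (H : Subgroup (Equiv.Perm (Fin d)))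
    (M : (Fin d → ℝ) →ₗ[ℝ] (Fin d → ℝ)) : Prop :=
  ∀ h ∈ H, ∀ x : Fin d → ℝ, (M fun j => x (h⁻¹ j)) = fun j => M x (h⁻¹ j)

/-- For `a ≠ b` and `i ≠ j` there is a permutation sending `a ↦ i` and `b ↦ j`. -/
lemma exists_perm_two {α : Type*} [DecidableEq α] {a b i j : α} (hab : a ≠ b) (hij : i ≠ j) :
    ∃ q : Equiv.Perm α, q a = i ∧ q b = j := by
  refine ⟨(Equiv.swap a i).trans (Equiv.swap (Equiv.swap a i b) j), ?_, ?_⟩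
  · have hic : i ≠ Equiv.swap a i b := by
      rcases eq_or_ne b i with h | h
      · subst h
        rw [Equiv.swap_apply_right]
        exact fun h' => hab h'.symm
      · rcases eq_or_ne b a with h' | h'
        · exact absurd h'.symm hab
        · rw [Equiv.swap_apply_of_ne_of_ne h' h]
          exact h.symm
    simp only [Equiv.trans_apply, Equiv.swap_apply_left]
    exact Equiv.swap_apply_of_ne_of_ne hic hij
  · simp only [Equiv.trans_apply, Equiv.swap_apply_left]

/-- **Characterization of DSS layers (Theorem 1).** For `G = S_n × H` acting on `ℝ^{n×d}` by
`((q,h)·X)_{ij} = X_{q⁻¹(i),h⁻¹(j)}`, a linear map `L : ℝ^{n×d} → ℝ^{n×d}` is `G`-equivariant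
if and only if it has the form `L(X)_i = L₁(xᵢ) + L₂(∑_{j≠i} xⱼ)` for linear `H`-equivariant
maps `L₁, L₂ : ℝ^d → ℝ^d`. -/
theorem dss_layer_characterization {n d : ℕ} (H : Subgroup (Equiv.Perm (Fin d)))
    (L : (Fin n → Fin d → ℝ) →ₗ[ℝ] (Fin n → Fin d → ℝ)) :
    (∀ (q : Equiv.Perm (Fin n)), ∀ h ∈ H, ∀ X : Fin n → Fin d → ℝ,
        (L fun i => fun j => X (q⁻¹ i) (h⁻¹ j)) = fun i => fun j => L X (q⁻¹ i) (h⁻¹ j)) ↔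
      ∃ L₁ L₂ : (Fin d → ℝ) →ₗ[ℝ] (Fin d → ℝ),
        IsHEquivariant H L₁ ∧ IsHEquivariant H L₂ ∧
          ∀ (X : Fin n → Fin d → ℝ) (i : Fin n),
            L X i = L₁ (X i) + L₂ (∑ j ∈ Finset.univ.erase i, X j) := by
  classical
  constructor
  · intro hEq
    -- the matrix of "blocks" of L
    set M : Fin n → Fin n → (Fin d → ℝ) →ₗ[ℝ] (Fin d → ℝ) :=
      fun i j => (LinearMap.proj i) ∘ₗ L ∘ₗ
        (LinearMap.single ℝ (fun _ : Fin n => Fin d → ℝ) j) with hMdef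
    have hM : ∀ i j x, M i j x = L (Pi.single j x) i := fun i j x => rfl
    -- permutation invariance of the blocks
    have hperm : ∀ (q : Equiv.Perm (Fin n)) (i j : Fin n) (x : Fin d → ℝ),
        M (q i) (q j) x = M i j x := by
      intro q i j x
      have h := hEq q 1 H.one_mem (Pi.single j x)
      have harg : (fun i' => fun j' =>
          (Pi.single j x : Fin n → Fin d → ℝ) (q⁻¹ i') ((1 : Equiv.Perm (Fin d))⁻¹ j'))
          = Pi.single (q j) x := by
        funext i' j'
        simp only [inv_one, Equiv.Perm.one_apply]
        rcases eq_or_ne i' (q j) with h' | h'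
        · subst h'
          simp
        · have hne : q⁻¹ i' ≠ j := fun hc => h' (by rw [← hc]; simp)
          simp only [Pi.single_eq_of_ne hne, Pi.single_eq_of_ne h', Pi.zero_apply]
      rw [harg] at h
      have h2 := congrFun h (q i)
      simp only [Equiv.Perm.coe_inv, Equiv.symm_apply_apply, inv_one, Equiv.Perm.one_apply] at h2
      rw [hM, hM, h2]
    -- H-equivariance of each block
    have hHeq : ∀ i j : Fin n, IsHEquivariant H (M i j) := by
      intro i j h hh x
      have hE := hEq 1 h hh (Pi.single j x)
      have harg : (fun i' => fun j' =>
          (Pi.single j x : Fin n → Fin d → ℝ) ((1 : Equiv.Perm (Fin n))⁻¹ i') (h⁻¹ j'))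
          = Pi.single j (fun j' => x (h⁻¹ j')) := by
        funext i' j'
        simp only [inv_one, Equiv.Perm.one_apply]
        rcases eq_or_ne i' j with h' | h'
        · subst h'
          simp
        · simp [Pi.single_eq_of_ne h']
      rw [harg] at hE
      have h2 := congrFun hE i
      simp only [inv_one, Equiv.Perm.one_apply] at h2
      rw [hM, hM, h2]
    -- decomposition of L via the blocks
    have hsum : ∀ (X : Fin n → Fin d → ℝ) (i : Fin n), L X i = ∑ j, M i j (X j) := by
      intro X i
      conv_lhs => rw [← Finset.univ_sum_single X]
      rw [map_sum]
      simp [hM]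
    rcases Nat.lt_or_ge n 2 with hn | hn
    · -- n = 0 or n = 1
      rcases Nat.lt_or_ge n 1 with hn0 | hn1
      · -- n = 0
        have : n = 0 := by omega
        subst this
        refine ⟨0, 0, ?_, ?_, fun X i => i.elim0⟩ <;>
          · intro h hh x
            funext j
            simp
      · -- n = 1
        have hn1' : n = 1 := by omega
        have i0 : Fin n := ⟨0, by omega⟩
        refine ⟨M i0 i0, 0, hHeq i0 i0, ?_, ?_⟩
        · intro h hh x
          funext j
          simp
        · intro X i
          have hsub : Subsingleton (Fin n) := by
            rw [hn1']
            infer_instance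
          have hii : i = i0 := Subsingleton.elim i i0
          have hsum1 : ∑ j, M i j (X j) = M i i (X i) :=
            Finset.sum_eq_single i
              (fun j _ hj => absurd (Subsingleton.elim j i) hj)
              (fun h => absurd (Finset.mem_univ i) h)
          have herase : ∑ j ∈ Finset.univ.erase i, X j = 0 :=
            Finset.sum_eq_zero fun j hj =>
              absurd (Subsingleton.elim j i) (Finset.ne_of_mem_erase hj)
          rw [hsum, hsum1, herase, map_zero, add_zero, hii]
    · -- n ≥ 2
      set i0 : Fin n := ⟨0, by omega⟩ with hi0
      set i1 : Fin n := ⟨1, by omega⟩ with hi1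
      have h01 : i0 ≠ i1 := by
        intro hc
        have := congrArg Fin.val hc
        simp [hi0, hi1] at this
      have hdiag : ∀ (i : Fin n) (x), M i i x = M i0 i0 x := by
        intro i x
        have := hperm (Equiv.swap i0 i) i0 i0 x
        rwa [Equiv.swap_apply_left] at this
      have hoff : ∀ (i j : Fin n), i ≠ j → ∀ x, M i j x = M i0 i1 x := by
        intro i j hij x
        obtain ⟨q, hq0, hq1⟩ := exists_perm_two h01 hij
        have := hperm q i0 i1 x
        rwa [hq0, hq1] at this
      refine ⟨M i0 i0, M i0 i1, hHeq i0 i0, hHeq i0 i1, ?_⟩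
      intro X i
      rw [hsum, map_sum, ← Finset.add_sum_erase _ _ (Finset.mem_univ i)]
      congr 1
      · exact hdiag i (X i)
      · exact Finset.sum_congr rfl fun j hj =>
          hoff i j (Finset.ne_of_mem_erase hj).symm (X j)
  · rintro ⟨L₁, L₂, h₁, h₂, hform⟩ q h hh X
    funext i
    rw [hform]
    have hsumrows : (∑ j ∈ Finset.univ.erase i, fun j' => X (q⁻¹ j) (h⁻¹ j'))
        = fun c => (∑ k ∈ Finset.univ.erase (q⁻¹ i), X k) (h⁻¹ c) := by
      funext c
      rw [Finset.sum_apply, Finset.sum_apply]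
      refine Finset.sum_equiv (q⁻¹ : Equiv.Perm (Fin n)) ?_ ?_
      · intro k
        simp only [Finset.mem_erase, Finset.mem_univ, and_true]
        exact ⟨fun hk hc => hk ((q⁻¹).injective hc), fun hk hc => hk (hc ▸ rfl)⟩
      · intro k _
        rfl
    rw [hsumrows, h₁ h hh, h₂ h hh]
    funext j'
    simp [hform]
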